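/- arXiv:2309.08426 — 2 statements merged into one kernel-verified Lean document; each statement's English description precedes it below -/
import Mathlib

section
/- For any traceless self-adjoint operator Δ on n qubits, ‖Δ‖_{W₁loc} ≤ Σ_{x∈[n]} max_{Λ∋x} ‖Tr_{Λᶜ}Δ‖₁ / (2|Λ| c_{|Λ|}) ≤ n · max_{∅≠Λ⊆[n]} ‖Tr_{Λᶜ}Δ‖₁ / (2|Λ| c_{|Λ|}). -/
open Matrix BigOperators
open scoped ComplexOrder

noncomputable section

namespace QW1

variable {ι : Type*} [Fintype ι] [DecidableEq ι]

/-- The space of (not necessarily Hermitian) operators on a system of qubits labelled by `ι`: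
matrices indexed by the computational basis `ι → Fin 2`. -/
abbrev QMat (ι : Type*) [Fintype ι] [DecidableEq ι] :=
  Matrix (ι → Fin 2) (ι → Fin 2) ℂ

/-- The operator norm (largest singular value) of a matrix. -/
noncomputable def opNorm {d : Type*} [Fintype d] [DecidableEq d] (A : Matrix d d ℂ) : ℝ :=
  ⨆ i, Real.sqrt ((Matrix.isHermitian_conjTranspose_mul_self A).eigenvalues i)

/-- The trace norm (sum of singular values) of a matrix. -/
noncomputable def traceNorm {d : Type*} [Fintype d] [DecidableEq d] (A : Matrix d d ℂ) : ℝ :=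
  ∑ i, Real.sqrt ((Matrix.isHermitian_conjTranspose_mul_self A).eigenvalues i)

/-- Combine an assignment of basis states on `Λ` and on its complement into one on all of `ι`. -/
def merge (Λ : Finset ι) (f : {x // x ∈ Λ} → Fin 2) (g : {x // x ∉ Λ} → Fin 2) (x : ι) :
    Fin 2 :=
  if h : x ∈ Λ then f ⟨x, h⟩ else g ⟨x, h⟩

/-- The partial trace over the qubits outside `Λ`, `Tr_{Λᶜ}`, yielding an operator on the
qubits in `Λ`. -/
noncomputable def ptrace (Λ : Finset ι) (A : QMat ι) :
    Matrix ({x // x ∈ Λ} → Fin 2) ({x // x ∈ Λ} → Fin 2) ℂ :=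
  fun f g => ∑ h : {x : ι // x ∉ Λ} → Fin 2, A (merge Λ f h) (merge Λ g h)

/-- The extension `M ⊗ I_{Λᶜ}` of an operator `M` on the qubits in `Λ` to all the qubits. -/
def embed (Λ : Finset ι)
    (M : Matrix ({x // x ∈ Λ} → Fin 2) ({x // x ∈ Λ} → Fin 2) ℂ) : QMat ι :=
  fun f g =>
    (if ∀ x : ι, x ∉ Λ → f x = g x then
      M (fun x => f x.1) (fun x => g x.1) else 0)

/-- `H` acts on (at most) the qubits in `Λ`: it has the form `H_Λ ⊗ I_{Λᶜ}` with `H_Λ`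
self-adjoint. -/
def ActsOn (Λ : Finset ι) (H : QMat ι) : Prop :=
  ∃ M, M.IsHermitian ∧ H = embed Λ M

/-- The local quantum norm with penalty coefficients `c`. -/
noncomputable def localNorm (c : ℕ → ℝ) (H : QMat ι) : ℝ :=
  sInf { r : ℝ | ∃ F : Finset ι → QMat ι, (∀ Λ, ActsOn Λ (F Λ)) ∧ H = ∑ Λ, F Λ ∧
    r = 2 * ⨆ x : ι, ∑ Λ ∈ Finset.univ.filter (fun Λ : Finset ι => x ∈ Λ),
      c Λ.card * opNorm (F Λ) }

/-- The local quantum `W₁` norm: the dual of the local quantum norm. -/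
noncomputable def W1loc (c : ℕ → ℝ) (Δ : QMat ι) : ℝ :=
  sSup { r : ℝ | ∃ H : QMat ι, H.IsHermitian ∧ localNorm c H ≤ 1 ∧ r = ((Δ * H).trace).re }

/-- The quantum `W₁` norm of De Palma et al. -/
noncomputable def W1 (Δ : QMat ι) : ℝ :=
  sInf { r : ℝ | ∃ D : ι → QMat ι,
    (∀ x, (D x).IsHermitian ∧ (D x).trace = 0 ∧ ptrace ({x}ᶜ : Finset ι) (D x) = 0) ∧
    Δ = ∑ x, D x ∧ r = (1 / 2) * ∑ x, traceNorm (D x) }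

/-- Tensor product of operators on two disjoint families of qubits. -/
def tensor {κ : Type*} [Fintype κ] [DecidableEq κ] (A : QMat ι) (B : QMat κ) :
    QMat (ι ⊕ κ) :=
  fun f g => A (f ∘ Sum.inl) (g ∘ Sum.inl) * B (f ∘ Sum.inr) (g ∘ Sum.inr)

/-- Tensor product of single-qubit operators, one for each qubit. -/
def tensorAll (B : ι → Matrix (Fin 2) (Fin 2) ℂ) : QMat ι :=
  fun f g => ∏ j, B j (f j) (g j)

/-- The four Pauli matrices `I, X, Y, Z`. -/
noncomputable def pauli : Fin 4 → Matrix (Fin 2) (Fin 2) ℂ :=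
  ![1, !![0, 1; 1, 0], !![0, -Complex.I; Complex.I, 0], !![1, 0; 0, -1]]

/-- The Pauli operator `σ_{a 1} ⊗ ⋯ ⊗ σ_{a n}`. -/
noncomputable def pauliOp (a : ι → Fin 4) : QMat ι :=
  tensorAll fun j => pauli (a j)

/-- The weight (locality) of a Pauli operator: the number of non-identity factors. -/
def weight (a : ι → Fin 4) : ℕ :=
  (Finset.univ.filter fun j => a j ≠ 0).card

/-- A quantum state: a positive semidefinite matrix of unit trace. (`PosSemidef` is taken with
respect to the complex order.) -/
def IsState (ρ : QMat ι) : Prop :=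
  ρ.PosSemidef ∧ ρ.trace = 1

end QW1

namespace QW1

variable {ι : Type*} [Fintype ι] [DecidableEq ι]

/-- The dependence `∂_x H` of the observable `H` on the qubit `x`. -/
noncomputable def dep (x : ι) (H : QMat ι) : ℝ :=
  2 * sInf { r : ℝ | ∃ K : QMat ι, ActsOn ({x}ᶜ : Finset ι) K ∧ r = opNorm (H - K) }

/-- The quantum Lipschitz constant `‖H‖_L = max_x ∂_x H`. -/
noncomputable def lipNorm (H : QMat ι) : ℝ :=
  ⨆ x : ι, dep x H

/-- Single-qubit unitaries rotating the eigenbases of the Paulis `Z`, `X`, `Y`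
to the computational basis. -/
noncomputable def ubasis : Fin 3 → Matrix (Fin 2) (Fin 2) ℂ :=
  ![1,
    (Real.sqrt 2 : ℂ)⁻¹ • !![1, 1; 1, -1],
    (Real.sqrt 2 : ℂ)⁻¹ • !![1, -Complex.I; 1, Complex.I]]

/-- The single-qubit classical shadow `3 U† |b⟩⟨b| U − I`. -/
noncomputable def shadow1 (w : Fin 3) (b : Fin 2) : Matrix (Fin 2) (Fin 2) ℂ :=
  (3 : ℂ) • ((ubasis w)ᴴ * Matrix.single b b 1 * ubasis w) - 1

/-- The classical shadow `⊗_j (3 U_j† |b_j⟩⟨b_j| U_j − I)` of the Pauli measurement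
primitive associated with the sampled basis choices and outcomes `s`. -/
noncomputable def shadowOf (s : ι → Fin 3 × Fin 2) : QMat ι :=
  tensorAll fun j => shadow1 (s j).1 (s j).2

/-- The probability of the sample `s` (a uniformly random Pauli basis measured on each qubit,
with outcomes distributed with the Born probability `⟨b|UρU†|b⟩`) when measuring one copy
of `ρ` in the Pauli measurement primitive. -/
noncomputable def shadowPMF (ρ : QMat ι) (s : ι → Fin 3 × Fin 2) : ℝ :=
  ((3 : ℝ) ^ Fintype.card ι)⁻¹ *
    (((tensorAll fun j => ubasis (s j).1) * ρ * (tensorAll fun j => ubasis (s j).1)ᴴ)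
      (fun j => (s j).2) (fun j => (s j).2)).re

open Classical in
/-- The probability that `N` independent classical shadows of `ρ` (from the Pauli
measurement primitive) satisfy the event `E`. -/
noncomputable def shadowProb (ρ : QMat ι) (N : ℕ)
    (E : (Fin N → ι → Fin 3 × Fin 2) → Prop) : ℝ :=
  ∑ ω : Fin N → ι → Fin 3 × Fin 2, if E ω then ∏ i, shadowPMF ρ (ω i) else 0

/-- Extension of a single-qubit operator `K` on the qubit `i`, acting as the identity on the
remaining qubits. -/
noncomputable def oneSite (i : ι) (K : Matrix (Fin 2) (Fin 2) ℂ) : QMat ι :=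
  tensorAll fun j => if j = i then K else 1

/-- Logarithm of a Hermitian matrix via its spectral decomposition (junk value otherwise). -/
noncomputable def mlog {d : Type*} [Fintype d] [DecidableEq d] (A : Matrix d d ℂ) :
    Matrix d d ℂ :=
  if hA : A.IsHermitian then
    (hA.eigenvectorUnitary : Matrix d d ℂ) *
      Matrix.diagonal (fun i => (Real.log (hA.eigenvalues i) : ℂ)) *
      star (hA.eigenvectorUnitary : Matrix d d ℂ)
  else 0

/-- The quantum relative entropy `S(ρ‖σ) = Tr[ρ(ln ρ − ln σ)]`. -/
noncomputable def relEnt (ρ σ : QMat ι) : ℝ :=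
  ((ρ * (mlog ρ - mlog σ)).trace).re

/-- The Gibbs state `e^{−H} / Tr e^{−H}`. -/
noncomputable def gibbs (H : QMat ι) : QMat ι :=
  ((NormedSpace.exp (-H)).trace)⁻¹ • NormedSpace.exp (-H)

end QW1


namespace QW1Aux

open QW1

variable {d : Type*} [Fintype d] [DecidableEq d]


variable {d : Type*} [Fintype d] [DecidableEq d]

/-- Quadratic-form expansion via the spectral theorem. -/
lemma qf_eq {M : Matrix d d ℂ} (hM : M.IsHermitian) (v : d → ℂ) :
    star v ⬝ᵥ (M *ᵥ v) =
      ∑ i, (hM.eigenvalues i : ℂ) *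
        (Complex.normSq ((star (hM.eigenvectorUnitary : Matrix d d ℂ) *ᵥ v) i) : ℝ) := by
  set U : Matrix d d ℂ := (hM.eigenvectorUnitary : Matrix d d ℂ) with hU
  set w : d → ℂ := star U *ᵥ v with hw
  have hsw : star w = star v ᵥ* U := by
    rw [hw, Matrix.star_mulVec, Matrix.star_eq_conjTranspose, Matrix.conjTranspose_conjTranspose]
  have key : M *ᵥ v = U *ᵥ (Matrix.diagonal (RCLike.ofReal ∘ hM.eigenvalues) *ᵥ w) := by
    rw [hw, Matrix.mulVec_mulVec, Matrix.mulVec_mulVec]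
    conv_lhs => rw [hM.spectral_theorem, Unitary.conjStarAlgAut_apply, ← hU]
  rw [key, dotProduct_mulVec, ← hsw]
  simp only [dotProduct, Pi.star_apply, Matrix.mulVec_diagonal]
  refine Finset.sum_congr rfl fun i _ => ?_
  rw [RCLike.star_def, mul_left_comm, ← Complex.normSq_eq_conj_mul_self]
  rfl

lemma norm_eq {M : Matrix d d ℂ} (hM : M.IsHermitian) (v : d → ℂ) :
    star v ⬝ᵥ v =
      ∑ i, (Complex.normSq ((star (hM.eigenvectorUnitary : Matrix d d ℂ) *ᵥ v) i) : ℝ) := by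
  set U : Matrix d d ℂ := (hM.eigenvectorUnitary : Matrix d d ℂ) with hU
  set w : d → ℂ := star U *ᵥ v with hw
  have hUU : U * star U = 1 := (Matrix.mem_unitaryGroup_iff).mp hM.eigenvectorUnitary.2
  have hsw : star w = star v ᵥ* U := by
    rw [hw, Matrix.star_mulVec, Matrix.star_eq_conjTranspose, Matrix.conjTranspose_conjTranspose]
  have h2 : star w ⬝ᵥ w = star v ⬝ᵥ v := by
    rw [hsw, hw, ← dotProduct_mulVec, Matrix.mulVec_mulVec, hUU, Matrix.one_mulVec]
  rw [← h2]
  simp only [dotProduct, Pi.star_apply]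
  rw [Complex.ofReal_sum]
  exact Finset.sum_congr rfl fun i _ => by
    rw [RCLike.star_def, ← Complex.normSq_eq_conj_mul_self]



lemma opNorm_nonneg (A : Matrix d d ℂ) : 0 ≤ opNorm A :=
  Real.iSup_nonneg fun _ => Real.sqrt_nonneg _

lemma traceNorm_nonneg (A : Matrix d d ℂ) : 0 ≤ traceNorm A :=
  Finset.sum_nonneg fun _ _ => Real.sqrt_nonneg _

lemma eig_le_sq_opNorm (A : Matrix d d ℂ) (i : d) :
    (Matrix.isHermitian_conjTranspose_mul_self A).eigenvalues i ≤ opNorm A ^ 2 := by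
  have h0 : 0 ≤ (Matrix.isHermitian_conjTranspose_mul_self A).eigenvalues i :=
    (Matrix.posSemidef_conjTranspose_mul_self A).eigenvalues_nonneg i
  have h1 : Real.sqrt ((Matrix.isHermitian_conjTranspose_mul_self A).eigenvalues i) ≤ opNorm A := by
    exact le_ciSup (f := fun j => Real.sqrt
      ((Matrix.isHermitian_conjTranspose_mul_self A).eigenvalues j))
      (Set.Finite.bddAbove (Set.finite_range _)) i
  calc (Matrix.isHermitian_conjTranspose_mul_self A).eigenvalues i
      = Real.sqrt ((Matrix.isHermitian_conjTranspose_mul_self A).eigenvalues i) ^ 2 :=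
        (Real.sq_sqrt h0).symm
    _ ≤ opNorm A ^ 2 := by
        have := Real.sqrt_nonneg ((Matrix.isHermitian_conjTranspose_mul_self A).eigenvalues i)
        nlinarith

lemma dot_self_re (u : d → ℂ) : (star u ⬝ᵥ u).re = ∑ i, Complex.normSq (u i) := by
  simp only [dotProduct, Pi.star_apply, Complex.re_sum]
  refine Finset.sum_congr rfl fun i _ => ?_
  rw [RCLike.star_def, ← Complex.normSq_eq_conj_mul_self]
  exact Complex.ofReal_re _

lemma dot_self_re_nonneg (u : d → ℂ) : 0 ≤ (star u ⬝ᵥ u).re := by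
  rw [dot_self_re]; exact Finset.sum_nonneg fun i _ => Complex.normSq_nonneg _

/-- `‖Av‖² ≤ ‖A‖²‖v‖²` in quadratic-form language. -/
lemma qf_transpose_mul_self_le (A : Matrix d d ℂ) (v : d → ℂ) :
    (star v ⬝ᵥ ((Aᴴ * A) *ᵥ v)).re ≤ opNorm A ^ 2 * (star v ⬝ᵥ v).re := by
  have hN := Matrix.isHermitian_conjTranspose_mul_self A
  rw [qf_eq hN v, norm_eq hN v]
  simp only [← Complex.ofReal_mul, Complex.re_sum, Complex.ofReal_re]
  rw [Finset.mul_sum]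
  refine Finset.sum_le_sum fun i _ => ?_
  exact mul_le_mul_of_nonneg_right (eig_le_sq_opNorm A i) (Complex.normSq_nonneg _)

/-- Every eigenvalue of a Hermitian matrix is attained as a quadratic form on a unit vector. -/
lemma qf_exists {M : Matrix d d ℂ} (hM : M.IsHermitian) (i : d) :
    ∃ v : d → ℂ, star v ⬝ᵥ v = 1 ∧ star v ⬝ᵥ (M *ᵥ v) = (hM.eigenvalues i : ℂ) := by
  have hsingle : star (hM.eigenvectorUnitary : Matrix d d ℂ) *ᵥ
      (hM.eigenvectorBasis i : d → ℂ) = Pi.single i 1 :=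
    hM.star_eigenvectorUnitary_mulVec i
  refine ⟨hM.eigenvectorBasis i, ?_, ?_⟩
  · rw [norm_eq hM, hsingle]
    push_cast
    rw [Finset.sum_eq_single i]
    · simp
    · intro j _ hj; simp [Pi.single_apply, hj]
    · simp
  · rw [qf_eq hM, hsingle]
    rw [Finset.sum_eq_single i]
    · simp
    · intro j _ hj; simp [Pi.single_apply, hj]
    · simp

lemma dot_mulVec_self (B : Matrix d d ℂ) (v : d → ℂ) :
    star (B *ᵥ v) ⬝ᵥ (B *ᵥ v) = star v ⬝ᵥ ((Bᴴ * B) *ᵥ v) := by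
  rw [Matrix.star_mulVec, dotProduct_mulVec, Matrix.vecMul_vecMul]
  rw [dotProduct_mulVec]

/-- Cauchy–Schwarz: quadratic form of any matrix on a unit vector is bounded by `opNorm`. -/
lemma abs_qf_le (B : Matrix d d ℂ) (v : d → ℂ) (hv : star v ⬝ᵥ v = 1) :
    ‖star v ⬝ᵥ (B *ᵥ v)‖ ≤ opNorm B := by
  have key : ∀ u : d → ℂ, ‖(WithLp.equiv 2 (d → ℂ)).symm u‖ = Real.sqrt (star u ⬝ᵥ u).re := by
    intro u
    rw [EuclideanSpace.norm_eq, dot_self_re]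
    congr 1
    exact Finset.sum_congr rfl fun i _ => by
      rw [Complex.sq_norm]; rfl
  have hinner : (inner ℂ ((WithLp.equiv 2 (d → ℂ)).symm v)
      ((WithLp.equiv 2 (d → ℂ)).symm (B *ᵥ v)) : ℂ) = star v ⬝ᵥ (B *ᵥ v) := by
    rw [PiLp.inner_apply]
    exact Finset.sum_congr rfl fun i _ => by
      rw [RCLike.inner_apply']
      rfl
  have hny : ‖(WithLp.equiv 2 (d → ℂ)).symm (B *ᵥ v)‖ ≤ opNorm B := by
    rw [key (B *ᵥ v), dot_mulVec_self]
    calc Real.sqrt ((star v ⬝ᵥ ((Bᴴ * B) *ᵥ v)).re)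
        ≤ Real.sqrt (opNorm B ^ 2 * (star v ⬝ᵥ v).re) :=
          Real.sqrt_le_sqrt (qf_transpose_mul_self_le B v)
      _ = opNorm B := by
          rw [hv]
          simp only [Complex.one_re, mul_one]
          exact Real.sqrt_sq (opNorm_nonneg B)
  have hnx : ‖(WithLp.equiv 2 (d → ℂ)).symm v‖ = 1 := by
    rw [key v, hv]
    simp
  calc ‖star v ⬝ᵥ (B *ᵥ v)‖
      = ‖(inner ℂ ((WithLp.equiv 2 (d → ℂ)).symm v)
          ((WithLp.equiv 2 (d → ℂ)).symm (B *ᵥ v)) : ℂ)‖ := by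
        rw [hinner]
    _ ≤ ‖(WithLp.equiv 2 (d → ℂ)).symm v‖ * ‖(WithLp.equiv 2 (d → ℂ)).symm (B *ᵥ v)‖ :=
        norm_inner_le_norm _ _
    _ ≤ 1 * opNorm B := by
        refine mul_le_mul (le_of_eq hnx) hny (norm_nonneg _) zero_le_one
    _ = opNorm B := one_mul _


lemma trace_conj_unitary (U D : Matrix d d ℂ) (hU : star U * U = 1) :
    (U * D * star U).trace = D.trace := by
  rw [Matrix.trace_mul_comm, ← Matrix.mul_assoc, hU, Matrix.one_mul]

lemma diag_entry_eq_qf (B U : Matrix d d ℂ) (i : d) :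
    (star U * B * U) i i = star (fun k => U k i) ⬝ᵥ (B *ᵥ fun k => U k i) := by
  simp only [Matrix.mul_apply, dotProduct, Matrix.mulVec, Matrix.star_apply,
    Pi.star_apply, Finset.sum_mul, Finset.mul_sum]
  rw [Finset.sum_comm]
  refine Finset.sum_congr rfl fun j _ => Finset.sum_congr rfl fun k _ => ?_
  ring

lemma unit_column (U : Matrix d d ℂ) (hU : star U * U = 1) (i : d) :
    star (fun k => U k i) ⬝ᵥ (fun k => U k i) = 1 := by
  have h := congrFun (congrFun hU i) i
  simpa [Matrix.mul_apply, Matrix.one_apply, dotProduct, Matrix.star_apply] using h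

/-- Hölder / von Neumann trace inequality for a Hermitian first factor. -/
lemma holder {A : Matrix d d ℂ} (hA : A.IsHermitian) (B : Matrix d d ℂ) :
    ((A * B).trace).re ≤ (∑ i, |hA.eigenvalues i|) * opNorm B := by
  set U : Matrix d d ℂ := (hA.eigenvectorUnitary : Matrix d d ℂ) with hUdef
  set D : Matrix d d ℂ := Matrix.diagonal (RCLike.ofReal ∘ hA.eigenvalues) with hDdef
  have hU1 : U * star U = 1 := Matrix.mem_unitaryGroup_iff.mp hA.eigenvectorUnitary.2
  have hU2 : star U * U = 1 := Matrix.mem_unitaryGroup_iff'.mp hA.eigenvectorUnitary.2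
  have hAB : (A * B).trace = (D * (star U * B * U)).trace := by
    conv_lhs => rw [hA.spectral_theorem, Unitary.conjStarAlgAut_apply, ← hUdef, ← hDdef]
    rw [show (U * D * star U) * B = U * (D * (star U * B)) by simp only [Matrix.mul_assoc]]
    rw [Matrix.trace_mul_comm, Matrix.mul_assoc]
  have htr : (D * (star U * B * U)).trace = ∑ i, (hA.eigenvalues i : ℂ) * (star U * B * U) i i := by
    rw [Matrix.trace]
    refine Finset.sum_congr rfl fun i _ => ?_
    rw [Matrix.diag_apply, hDdef, Matrix.diagonal_mul]
    rfl
  rw [hAB, htr, Complex.re_sum]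
  have step : ∀ i : d, ((hA.eigenvalues i : ℂ) * (star U * B * U) i i).re
      ≤ |hA.eigenvalues i| * opNorm B := by
    intro i
    rw [Complex.re_ofReal_mul]
    have h1 : ‖(star U * B * U) i i‖ ≤ opNorm B := by
      rw [diag_entry_eq_qf]
      exact abs_qf_le B _ (unit_column U hU2 i)
    calc hA.eigenvalues i * ((star U * B * U) i i).re
        ≤ |hA.eigenvalues i * ((star U * B * U) i i).re| := le_abs_self _
      _ = |hA.eigenvalues i| * |((star U * B * U) i i).re| := abs_mul _ _
      _ ≤ |hA.eigenvalues i| * ‖(star U * B * U) i i‖ :=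
          mul_le_mul_of_nonneg_left (Complex.abs_re_le_norm _) (abs_nonneg _)
      _ ≤ |hA.eigenvalues i| * opNorm B :=
          mul_le_mul_of_nonneg_left h1 (abs_nonneg _)
  calc ∑ i, ((hA.eigenvalues i : ℂ) * (star U * B * U) i i).re
      ≤ ∑ i, |hA.eigenvalues i| * opNorm B := Finset.sum_le_sum fun i _ => step i
    _ = (∑ i, |hA.eigenvalues i|) * opNorm B := (Finset.sum_mul _ _ _).symm

open scoped MatrixOrder in
/-- The trace norm of a Hermitian matrix equals the sum of absolute values of its
eigenvalues. -/
lemma traceNorm_hermitian {A : Matrix d d ℂ} (hA : A.IsHermitian) :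
    traceNorm A = ∑ i, |hA.eigenvalues i| := by
  have hP : (Aᴴ * A).PosSemidef := Matrix.posSemidef_conjTranspose_mul_self A
  set U : Matrix d d ℂ := (hA.eigenvectorUnitary : Matrix d d ℂ) with hUdef
  set D : Matrix d d ℂ := Matrix.diagonal (RCLike.ofReal ∘ hA.eigenvalues) with hDdef
  set Dabs : Matrix d d ℂ := Matrix.diagonal (fun i => Complex.ofReal |hA.eigenvalues i|) with hDadef
  have hU1 : U * star U = 1 := Matrix.mem_unitaryGroup_iff.mp hA.eigenvectorUnitary.2
  have hU2 : star U * U = 1 := Matrix.mem_unitaryGroup_iff'.mp hA.eigenvectorUnitary.2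
  have hsand : ∀ D₁ D₂ : Matrix d d ℂ,
      (U * D₁ * star U) * (U * D₂ * star U) = U * (D₁ * D₂) * star U := by
    intro D₁ D₂
    simp only [Matrix.mul_assoc]
    rw [← Matrix.mul_assoc (star U) U, hU2, Matrix.one_mul]
  set T : Matrix d d ℂ := U * Dabs * star U with hTdef
  have hdiagpsd : Dabs.PosSemidef := by
    rw [hDadef]
    refine Matrix.posSemidef_diagonal_iff.mpr fun i => ?_
    rw [Complex.zero_le_real]
    exact abs_nonneg _
  have hTpsd : T.PosSemidef := by
    have h := hdiagpsd.mul_mul_conjTranspose_same U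
    rwa [← Matrix.star_eq_conjTranspose] at h
  have hT2 : T ^ 2 = Aᴴ * A := by
    rw [sq, hTdef, hsand]
    rw [hA.eq]
    conv_rhs => rw [hA.spectral_theorem, Unitary.conjStarAlgAut_apply, ← hUdef, ← hDdef, hsand]
    congr 1
    congr 1
    rw [Matrix.diagonal_mul_diagonal, Matrix.diagonal_mul_diagonal]
    have habs : (fun i => (Complex.ofReal |hA.eigenvalues i|) * Complex.ofReal |hA.eigenvalues i|)
        = fun i => (RCLike.ofReal ∘ hA.eigenvalues) i * (RCLike.ofReal ∘ hA.eigenvalues) i := by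
      funext i
      simp only [Function.comp_apply]
      rw [← RCLike.ofReal_mul, ← Complex.ofReal_mul, abs_mul_abs_self]
      first
      | rfl
      | norm_cast
    rw [habs]
  have hTsqrt : T = CFC.sqrt (Aᴴ * A) := by
    rw [eq_comm, CFC.sqrt_eq_iff _ _ hP.nonneg hTpsd.nonneg, ← sq, hT2]
  have t2 : T.trace = ((∑ i, |hA.eigenvalues i| : ℝ) : ℂ) := by
    rw [hTdef, trace_conj_unitary U Dabs hU2, hDadef, Matrix.trace_diagonal]
    push_cast
    rfl
  have t1 : (CFC.sqrt (Aᴴ * A)).trace = ((traceNorm A : ℝ) : ℂ) := by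
    rw [CFC.sqrt_eq_real_sqrt _ hP.nonneg, cfcₙ_eq_cfc, hP.1.cfc_eq, Matrix.IsHermitian.cfc,
      Unitary.conjStarAlgAut_apply]
    rw [trace_conj_unitary _ _
      (Matrix.mem_unitaryGroup_iff'.mp hP.1.eigenvectorUnitary.2), Matrix.trace_diagonal]
    rw [traceNorm]
    push_cast
    rfl
  have := t2.symm.trans ((congrArg Matrix.trace hTsqrt).trans t1)
  exact_mod_cast this.symm

lemma traceNorm_zero : traceNorm (0 : Matrix d d ℂ) = 0 := by
  rw [traceNorm_hermitian (Matrix.isHermitian_zero (α := ℂ) (n := d))]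
  refine Finset.sum_eq_zero fun i _ => ?_
  have : (Matrix.isHermitian_zero (α := ℂ) (n := d)).eigenvalues i = 0 :=
    congrFun ((Matrix.isHermitian_zero (α := ℂ) (n := d)).eigenvalues_eq_zero_iff.mpr rfl) i
  rw [this, abs_zero]


section Combinatorics

variable {ι : Type*} [Fintype ι] [DecidableEq ι]

def restr (Λ : Finset ι) (f : ι → Fin 2) : {x // x ∈ Λ} → Fin 2 := fun x => f x.1

def restrC (Λ : Finset ι) (f : ι → Fin 2) : {x // x ∉ Λ} → Fin 2 := fun x => f x.1

@[simp] lemma restr_merge (Λ : Finset ι) (a : {x // x ∈ Λ} → Fin 2)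
    (h : {x // x ∉ Λ} → Fin 2) : restr Λ (merge Λ a h) = a :=
  funext fun x => by simp [restr, merge, x.2]

@[simp] lemma restrC_merge (Λ : Finset ι) (a : {x // x ∈ Λ} → Fin 2)
    (h : {x // x ∉ Λ} → Fin 2) : restrC Λ (merge Λ a h) = h :=
  funext fun x => by simp [restrC, merge, x.2]

@[simp] lemma merge_restr (Λ : Finset ι) (f : ι → Fin 2) :
    merge Λ (restr Λ f) (restrC Λ f) = f := by
  funext x
  by_cases h : x ∈ Λ <;> simp [restr, restrC, merge, h]

/-- Splitting a configuration of all qubits into the configurations inside and outside `Λ`. -/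
def splitEquiv (Λ : Finset ι) :
    (ι → Fin 2) ≃ (({x // x ∈ Λ} → Fin 2) × ({x // x ∉ Λ} → Fin 2)) where
  toFun f := (restr Λ f, restrC Λ f)
  invFun p := merge Λ p.1 p.2
  left_inv f := merge_restr Λ f
  right_inv p := by simp

lemma sum_split (Λ : Finset ι) (F : (ι → Fin 2) → ℂ) :
    ∑ f, F f = ∑ a, ∑ h, F (merge Λ a h) := by
  rw [← Equiv.sum_comp (splitEquiv Λ).symm F, Fintype.sum_prod_type]
  rfl

lemma sum_ite_ite {γ : Type*} [Fintype γ] [DecidableEq γ] (h h' : γ) (X Y : ℂ) :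
    (∑ u, (if h = u then X else 0) * (if u = h' then Y else 0)) = if h = h' then X * Y else 0 := by
  have hterm : ∀ u, (if h = u then X else 0) * (if u = h' then Y else 0)
      = if u = h then (if h = h' then X * Y else 0) else 0 := by
    intro u
    by_cases h1 : u = h
    · subst h1
      rw [if_pos rfl, if_pos rfl]
      by_cases h2 : u = h' <;> simp [h2]
    · rw [if_neg (fun hc => h1 hc.symm), zero_mul, if_neg h1]
  simp only [hterm]
  rw [Finset.sum_ite_eq' Finset.univ h]
  simp

lemma embed_apply_merge (Λ : Finset ι)
    (M : Matrix ({x // x ∈ Λ} → Fin 2) ({x // x ∈ Λ} → Fin 2) ℂ)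
    (a b : {x // x ∈ Λ} → Fin 2) (h h' : {x // x ∉ Λ} → Fin 2) :
    embed Λ M (merge Λ a h) (merge Λ b h') = if h = h' then M a b else 0 := by
  by_cases hh : h = h'
  · subst hh
    rw [if_pos rfl]
    show (if ∀ x : ι, x ∉ Λ → merge Λ a h x = merge Λ b h x then
      M (fun x => merge Λ a h x.1) (fun x => merge Λ b h x.1) else 0) = M a b
    rw [if_pos fun x hx => by simp [merge, hx]]
    congr 1
    · funext x; simp [merge, x.2]
    · funext x; simp [merge, x.2]
  · rw [if_neg hh]
    show (if ∀ x : ι, x ∉ Λ → merge Λ a h x = merge Λ b h' x then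
      M (fun x => merge Λ a h x.1) (fun x => merge Λ b h' x.1) else 0) = 0
    rw [if_neg]
    intro hcond
    apply hh
    funext x
    have h1 := hcond x.1 x.2
    simpa [merge, x.2] using h1

lemma matrix_ext_merge {Λ : Finset ι} {X Y : QMat ι}
    (h : ∀ a b h h', X (merge Λ a h) (merge Λ b h') = Y (merge Λ a h) (merge Λ b h')) :
    X = Y := by
  ext f g
  rw [← merge_restr Λ f, ← merge_restr Λ g]
  exact h _ _ _ _

lemma embed_conjTranspose (Λ : Finset ι)
    (M : Matrix ({x // x ∈ Λ} → Fin 2) ({x // x ∈ Λ} → Fin 2) ℂ) :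
    (embed Λ M)ᴴ = embed Λ Mᴴ := by
  apply matrix_ext_merge (Λ := Λ)
  intro a b h h'
  rw [Matrix.conjTranspose_apply, embed_apply_merge, embed_apply_merge]
  by_cases hh : h = h'
  · subst hh
    rw [if_pos rfl, if_pos rfl, Matrix.conjTranspose_apply]
  · rw [if_neg hh, if_neg (fun hc => hh hc.symm), star_zero]

lemma embed_mul (Λ : Finset ι)
    (M N : Matrix ({x // x ∈ Λ} → Fin 2) ({x // x ∈ Λ} → Fin 2) ℂ) :
    embed Λ (M * N) = embed Λ M * embed Λ N := by
  apply matrix_ext_merge (Λ := Λ)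
  intro a b h h'
  have hrhs : (embed Λ M * embed Λ N) (merge Λ a h) (merge Λ b h')
      = ∑ t, ∑ u, (if h = u then M a t else 0) * (if u = h' then N t b else 0) := by
    rw [Matrix.mul_apply]
    rw [show (∑ k, embed Λ M (merge Λ a h) k * embed Λ N k (merge Λ b h'))
        = ∑ t, ∑ u, embed Λ M (merge Λ a h) (merge Λ t u) * embed Λ N (merge Λ t u) (merge Λ b h')
      from sum_split Λ _]
    simp only [embed_apply_merge]
  rw [hrhs, embed_apply_merge]
  simp only [sum_ite_ite]
  by_cases hh : h = h'
  · simp only [if_pos hh, Matrix.mul_apply]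
  · simp only [if_neg hh, Finset.sum_const_zero]

lemma trace_mul_embed (Λ : Finset ι) (Δ : QMat ι)
    (M : Matrix ({x // x ∈ Λ} → Fin 2) ({x // x ∈ Λ} → Fin 2) ℂ) :
    (Δ * embed Λ M).trace = (ptrace Λ Δ * M).trace := by
  have lhs : (Δ * embed Λ M).trace
      = ∑ a, ∑ h, ∑ b, Δ (merge Λ a h) (merge Λ b h) * M b a := by
    rw [Matrix.trace]
    rw [show (∑ f, (Δ * embed Λ M).diag f)
        = ∑ a, ∑ h, (Δ * embed Λ M) (merge Λ a h) (merge Λ a h) from sum_split Λ _]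
    refine Finset.sum_congr rfl fun a _ => Finset.sum_congr rfl fun h _ => ?_
    rw [Matrix.mul_apply]
    rw [show (∑ k, Δ (merge Λ a h) k * embed Λ M k (merge Λ a h))
        = ∑ b, ∑ u, Δ (merge Λ a h) (merge Λ b u) * embed Λ M (merge Λ b u) (merge Λ a h)
      from sum_split Λ _]
    refine Finset.sum_congr rfl fun b _ => ?_
    rw [Finset.sum_eq_single h]
    · rw [embed_apply_merge, if_pos rfl]
    · intro u _ hu
      rw [embed_apply_merge, if_neg hu, mul_zero]
    · intro habs; exact absurd (Finset.mem_univ h) habs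
  rw [lhs, Matrix.trace]
  rw [show (∑ a, (ptrace Λ Δ * M).diag a) = ∑ a, ∑ b, (ptrace Λ Δ) a b * M b a from
    Finset.sum_congr rfl fun a _ => Matrix.mul_apply]
  refine Finset.sum_congr rfl fun a _ => ?_
  rw [Finset.sum_comm]
  refine Finset.sum_congr rfl fun b _ => ?_
  rw [show (ptrace Λ Δ) a b = ∑ h, Δ (merge Λ a h) (merge Λ b h) from rfl, Finset.sum_mul]

lemma embed_zero (Λ : Finset ι) :
    embed Λ (0 : Matrix ({x // x ∈ Λ} → Fin 2) ({x // x ∈ Λ} → Fin 2) ℂ) = (0 : QMat ι) := by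
  apply matrix_ext_merge (Λ := Λ)
  intro a b h h'
  rw [embed_apply_merge]
  simp

lemma ptrace_isHermitian (Λ : Finset ι) {Δ : QMat ι} (hΔ : Δ.IsHermitian) :
    (ptrace Λ Δ).IsHermitian := by
  refine Matrix.IsHermitian.ext fun a b => ?_
  show star ((ptrace Λ Δ) b a) = (ptrace Λ Δ) a b
  show star (∑ h, Δ (merge Λ b h) (merge Λ a h)) = ∑ h, Δ (merge Λ a h) (merge Λ b h)
  rw [star_sum]
  refine Finset.sum_congr rfl fun h _ => ?_
  have h1 := congrFun (congrFun hΔ (merge Λ a h)) (merge Λ b h)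
  rw [← h1, Matrix.conjTranspose_apply]

def emptyEquiv : ({x : ι // x ∉ (∅ : Finset ι)} → Fin 2) ≃ (ι → Fin 2) where
  toFun hh x := hh ⟨x, Finset.notMem_empty x⟩
  invFun g s := g s.1
  left_inv hh := rfl
  right_inv g := rfl

lemma ptrace_empty {Δ : QMat ι} (h : Δ.trace = 0) : ptrace (∅ : Finset ι) Δ = 0 := by
  ext a b
  show (∑ hh, Δ (merge ∅ a hh) (merge ∅ b hh)) = 0
  have key : ∀ cfg : {x // x ∈ (∅ : Finset ι)} → Fin 2,
      ∀ hh : {x : ι // x ∉ (∅ : Finset ι)} → Fin 2,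
      merge ∅ cfg hh = emptyEquiv hh := by
    intro cfg hh
    funext x
    exact dif_neg (Finset.notMem_empty x)
  calc (∑ hh, Δ (merge ∅ a hh) (merge ∅ b hh)) = ∑ g, Δ g g := by
        refine Fintype.sum_equiv emptyEquiv _ _ fun hh => ?_
        rw [key a hh, key b hh]
    _ = Δ.trace := rfl
    _ = 0 := h

lemma opNorm_le_opNorm_embed (Λ : Finset ι)
    (M : Matrix ({x // x ∈ Λ} → Fin 2) ({x // x ∈ Λ} → Fin 2) ℂ) :
    opNorm M ≤ opNorm (embed Λ M) := by
  refine Real.iSup_le (fun i => ?_) (opNorm_nonneg _)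
  have hN := Matrix.isHermitian_conjTranspose_mul_self M
  obtain ⟨v, hv1, hv2⟩ := qf_exists hN i
  set h₀ : {x // x ∉ Λ} → Fin 2 := fun _ => 0 with hh₀
  set w : (ι → Fin 2) → ℂ :=
    fun f => if restrC Λ f = h₀ then v (restr Λ f) else 0 with hwdef
  have hw : ∀ a h, w (merge Λ a h) = if h = h₀ then v a else 0 := by
    intro a h
    rw [hwdef]
    simp only [restr_merge, restrC_merge]
  have hww : star w ⬝ᵥ w = 1 := by
    rw [dotProduct]
    rw [show (∑ f, star w f * w f) = ∑ a, ∑ h, star w (merge Λ a h) * w (merge Λ a h)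
      from sum_split Λ _]
    have : ∀ a (h : {x // x ∉ Λ} → Fin 2), star w (merge Λ a h) * w (merge Λ a h)
        = if h = h₀ then star (v a) * v a else 0 := by
      intro a h
      rw [Pi.star_apply, hw]
      by_cases hh : h = h₀
      · rw [if_pos hh, if_pos hh]
      · rw [if_neg hh, if_neg hh, star_zero, zero_mul]
    simp only [this]
    rw [show (∑ a, ∑ h, if h = h₀ then star (v a) * v a else 0) = ∑ a, star (v a) * v a from
      Finset.sum_congr rfl fun a _ => by rw [Finset.sum_ite_eq' Finset.univ h₀]; simp]
    exact hv1
  have hmv : ∀ a h, ((embed Λ (Mᴴ * M)) *ᵥ w) (merge Λ a h)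
      = if h = h₀ then ((Mᴴ * M) *ᵥ v) a else 0 := by
    intro a h
    rw [Matrix.mulVec, dotProduct]
    rw [show (∑ g, embed Λ (Mᴴ * M) (merge Λ a h) g * w g)
        = ∑ b, ∑ u, embed Λ (Mᴴ * M) (merge Λ a h) (merge Λ b u) * w (merge Λ b u)
      from sum_split Λ _]
    simp only [embed_apply_merge, hw, sum_ite_ite]
    by_cases hh : h = h₀
    · simp only [if_pos hh, Matrix.mulVec, dotProduct]
    · simp only [if_neg hh, Finset.sum_const_zero]
  have hqf : star w ⬝ᵥ ((embed Λ (Mᴴ * M)) *ᵥ w) = (hN.eigenvalues i : ℂ) := by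
    rw [dotProduct]
    rw [show (∑ f, star w f * ((embed Λ (Mᴴ * M)) *ᵥ w) f)
        = ∑ a, ∑ h, star w (merge Λ a h) * ((embed Λ (Mᴴ * M)) *ᵥ w) (merge Λ a h)
      from sum_split Λ _]
    have : ∀ a (h : {x // x ∉ Λ} → Fin 2),
        star w (merge Λ a h) * ((embed Λ (Mᴴ * M)) *ᵥ w) (merge Λ a h)
        = if h = h₀ then star (v a) * ((Mᴴ * M) *ᵥ v) a else 0 := by
      intro a h
      rw [Pi.star_apply, hw, hmv]
      by_cases hh : h = h₀
      · rw [if_pos hh, if_pos hh, if_pos hh]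
      · rw [if_neg hh, if_neg hh, if_neg hh, star_zero, zero_mul]
    simp only [this]
    rw [show (∑ a, ∑ h, if h = h₀ then star (v a) * ((Mᴴ * M) *ᵥ v) a else 0)
        = ∑ a, star (v a) * ((Mᴴ * M) *ᵥ v) a from
      Finset.sum_congr rfl fun a _ => by rw [Finset.sum_ite_eq' Finset.univ h₀]; simp]
    exact hv2
  have hbound : hN.eigenvalues i ≤ opNorm (embed Λ M) ^ 2 := by
    have h1 : (star w ⬝ᵥ (((embed Λ M)ᴴ * (embed Λ M)) *ᵥ w)).re
        ≤ opNorm (embed Λ M) ^ 2 * (star w ⬝ᵥ w).re :=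
      qf_transpose_mul_self_le (embed Λ M) w
    rw [hww, embed_conjTranspose, ← embed_mul, hqf] at h1
    simpa using h1
  have h0 : 0 ≤ hN.eigenvalues i :=
    (Matrix.posSemidef_conjTranspose_mul_self M).eigenvalues_nonneg i
  calc Real.sqrt (hN.eigenvalues i) ≤ Real.sqrt (opNorm (embed Λ M) ^ 2) :=
        Real.sqrt_le_sqrt hbound
    _ = opNorm (embed Λ M) := Real.sqrt_sq (opNorm_nonneg _)


lemma embed_univ (H : QMat ι) :
    embed (Finset.univ : Finset ι)
      (fun a b => H (fun x => a ⟨x, Finset.mem_univ x⟩) (fun x => b ⟨x, Finset.mem_univ x⟩))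
      = H := by
  funext f g
  show (if ∀ x : ι, x ∉ Finset.univ → f x = g x
      then H (fun x => f x) (fun x => g x) else 0) = H f g
  rw [if_pos fun x hx => absurd (Finset.mem_univ x) hx]

lemma double_count {α : Type*} [Fintype α] [DecidableEq α] (f : α → Finset α → ℝ) :
    ∑ Λ : Finset α, ∑ x ∈ Λ, f x Λ
      = ∑ x : α, ∑ Λ ∈ Finset.univ.filter (fun Λ : Finset α => x ∈ Λ), f x Λ := by
  have h1 : ∀ Λ : Finset α, ∑ x ∈ Λ, f x Λ = ∑ x : α, if x ∈ Λ then f x Λ else 0 := by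
    intro Λ
    rw [Finset.sum_ite_mem, Finset.univ_inter]
  simp only [h1]
  rw [Finset.sum_comm]
  exact Finset.sum_congr rfl fun x _ => (Finset.sum_filter _ _).symm

end Combinatorics

end QW1Aux

open QW1 Matrix Complex

/-- `‖Δ‖_{W₁loc} ≤ Σ_x max_{Λ∋x} ‖Tr_{Λᶜ}Δ‖₁/(2|Λ| c_{|Λ|})
≤ n · max_{∅≠Λ⊆[n]} ‖Tr_{Λᶜ}Δ‖₁/(2|Λ| c_{|Λ|})`. -/
theorem stmt3 {n : ℕ} (c : ℕ → ℝ) (hc1 : c 1 = 1)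
    (hcmono : ∀ k l, 1 ≤ k → k ≤ l → l ≤ n → c k ≤ c l)
    (Δ : QMat (Fin n)) (hΔ : Δ.IsHermitian) (hΔtr : Δ.trace = 0) :
    W1loc c Δ ≤ (∑ x : Fin n, ⨆ Λ : {Λ : Finset (Fin n) // x ∈ Λ},
        traceNorm (ptrace Λ.1 Δ) / (2 * Λ.1.card * c Λ.1.card)) ∧
    (∑ x : Fin n, ⨆ Λ : {Λ : Finset (Fin n) // x ∈ Λ},
        traceNorm (ptrace Λ.1 Δ) / (2 * Λ.1.card * c Λ.1.card)) ≤
      n * ⨆ Λ : {Λ : Finset (Fin n) // Λ.Nonempty},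
        traceNorm (ptrace Λ.1 Δ) / (2 * Λ.1.card * c Λ.1.card) := by
  classical
  have htnn : ∀ Λ : Finset (Fin n), 0 ≤ traceNorm (ptrace Λ Δ) :=
    fun Λ => QW1Aux.traceNorm_nonneg _
  have hc1' : ∀ Λ : Finset (Fin n), Λ.Nonempty → (1:ℝ) ≤ c Λ.card := by
    intro Λ hΛ
    rw [← hc1]
    refine hcmono 1 Λ.card le_rfl (Finset.one_le_card.mpr hΛ) ?_
    have := Finset.card_le_univ Λ
    rwa [Fintype.card_fin] at this
  have hden : ∀ Λ : Finset (Fin n), Λ.Nonempty → (0:ℝ) < 2 * Λ.card * c Λ.card := by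
    intro Λ hΛ
    have h1 : (0:ℝ) < Λ.card := by
      exact_mod_cast Finset.card_pos.mpr hΛ
    have h2 := hc1' Λ hΛ
    nlinarith
  have hs0 : ∀ x : Fin n, 0 ≤ ⨆ Λ : {Λ : Finset (Fin n) // x ∈ Λ},
      traceNorm (ptrace Λ.1 Δ) / (2 * Λ.1.card * c Λ.1.card) := by
    intro x
    refine Real.iSup_nonneg fun Λ => ?_
    exact div_nonneg (htnn Λ.1) (le_of_lt (hden Λ.1 ⟨x, Λ.2⟩))
  have hS0 : 0 ≤ ∑ x : Fin n, ⨆ Λ : {Λ : Finset (Fin n) // x ∈ Λ},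
      traceNorm (ptrace Λ.1 Δ) / (2 * Λ.1.card * c Λ.1.card) :=
    Finset.sum_nonneg fun x _ => hs0 x
  constructor
  · -- first inequality
    refine Real.sSup_le ?_ hS0
    rintro r ⟨H, hH, hloc, rfl⟩
    refine le_of_forall_pos_le_add fun ε hε => ?_
    set S : ℝ := ∑ x : Fin n, ⨆ Λ : {Λ : Finset (Fin n) // x ∈ Λ},
      traceNorm (ptrace Λ.1 Δ) / (2 * Λ.1.card * c Λ.1.card) with hSdef
    set ε' : ℝ := ε / (S + 1) with hε'def
    have hS1 : (0:ℝ) < S + 1 := by linarith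
    have hε' : 0 < ε' := div_pos hε hS1
    -- extract a decomposition of H
    simp only [localNorm] at hloc
    have hne : Set.Nonempty { r : ℝ | ∃ F : Finset (Fin n) → QMat (Fin n),
        (∀ Λ, ActsOn Λ (F Λ)) ∧ H = ∑ Λ, F Λ ∧
        r = 2 * ⨆ x : Fin n, ∑ Λ ∈ Finset.univ.filter (fun Λ : Finset (Fin n) => x ∈ Λ),
          c Λ.card * opNorm (F Λ) } := by
      refine ⟨_, fun Λ => if Λ = Finset.univ then H else 0, fun Λ => ?_, ?_, rfl⟩
      · show ActsOn Λ (if Λ = Finset.univ then H else 0)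
        by_cases hΛ : Λ = Finset.univ
        · subst hΛ
          rw [if_pos rfl]
          refine ⟨fun a b => H (fun x => a ⟨x, Finset.mem_univ x⟩)
            (fun x => b ⟨x, Finset.mem_univ x⟩), ?_, (QW1Aux.embed_univ H).symm⟩
          refine Matrix.IsHermitian.ext fun a b => ?_
          have h2 := congrFun (congrFun hH (fun x => a ⟨x, Finset.mem_univ x⟩))
            (fun x => b ⟨x, Finset.mem_univ x⟩)
          rw [← h2, Matrix.conjTranspose_apply]
        · rw [if_neg hΛ]
          exact ⟨0, Matrix.isHermitian_zero, (QW1Aux.embed_zero Λ).symm⟩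
      · show H = ∑ Λ : Finset (Fin n), if Λ = Finset.univ then H else 0
        rw [Finset.sum_ite_eq' Finset.univ Finset.univ (fun _ => H)]
        rw [if_pos (Finset.mem_univ _)]
    obtain ⟨r₀, hr₀mem, hr₀lt⟩ := exists_lt_of_csInf_lt hne
      (lt_of_le_of_lt hloc (by linarith : (1:ℝ) < 1 + ε'))
    obtain ⟨F, hFacts, hFsum, hr₀⟩ := hr₀mem
    choose M hMherm hFM using hFacts
    -- key Hölder bound per Λ
    have key : ∀ Λ : Finset (Fin n), ((Δ * F Λ).trace).re
        ≤ traceNorm (ptrace Λ Δ) * opNorm (F Λ) := by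
      intro Λ
      have hherm := QW1Aux.ptrace_isHermitian Λ hΔ
      have h1 : ((Δ * F Λ).trace).re = ((ptrace Λ Δ * M Λ).trace).re := by
        rw [hFM Λ, QW1Aux.trace_mul_embed]
      rw [h1]
      calc ((ptrace Λ Δ * M Λ).trace).re
          ≤ (∑ i, |hherm.eigenvalues i|) * opNorm (M Λ) := QW1Aux.holder hherm (M Λ)
        _ = traceNorm (ptrace Λ Δ) * opNorm (M Λ) := by
            rw [QW1Aux.traceNorm_hermitian hherm]
        _ ≤ traceNorm (ptrace Λ Δ) * opNorm (F Λ) := by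
            rw [hFM Λ]
            exact mul_le_mul_of_nonneg_left (QW1Aux.opNorm_le_opNorm_embed Λ (M Λ))
              (htnn Λ)
    -- distribute over the sites of Λ
    have key2 : ∀ Λ : Finset (Fin n), traceNorm (ptrace Λ Δ) * opNorm (F Λ)
        ≤ ∑ x ∈ Λ, 2 * c Λ.card *
            (⨆ Λ' : {Λ' : Finset (Fin n) // x ∈ Λ'},
              traceNorm (ptrace Λ'.1 Δ) / (2 * Λ'.1.card * c Λ'.1.card)) * opNorm (F Λ) := by
      intro Λ
      rcases Finset.eq_empty_or_nonempty Λ with rfl | hΛ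
      · rw [QW1Aux.ptrace_empty hΔtr, QW1Aux.traceNorm_zero, zero_mul, Finset.sum_empty]
      · have hcard : (0:ℝ) < Λ.card := by exact_mod_cast Finset.card_pos.mpr hΛ
        have hsx : ∀ x ∈ Λ, traceNorm (ptrace Λ Δ) / (Λ.card : ℝ)
            ≤ 2 * c Λ.card * (⨆ Λ' : {Λ' : Finset (Fin n) // x ∈ Λ'},
              traceNorm (ptrace Λ'.1 Δ) / (2 * Λ'.1.card * c Λ'.1.card)) := by
          intro x hx
          have h1 : traceNorm (ptrace Λ Δ) / (2 * Λ.card * c Λ.card)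
              ≤ ⨆ Λ' : {Λ' : Finset (Fin n) // x ∈ Λ'},
                traceNorm (ptrace Λ'.1 Δ) / (2 * Λ'.1.card * c Λ'.1.card) :=
            le_ciSup (f := fun Λ' : {Λ' : Finset (Fin n) // x ∈ Λ'} =>
              traceNorm (ptrace Λ'.1 Δ) / (2 * Λ'.1.card * c Λ'.1.card))
              (Set.Finite.bddAbove (Set.finite_range _))
              (⟨Λ, hx⟩ : {Λ' : Finset (Fin n) // x ∈ Λ'})
          have h2 : traceNorm (ptrace Λ Δ)
              ≤ 2 * Λ.card * c Λ.card * (⨆ Λ' : {Λ' : Finset (Fin n) // x ∈ Λ'},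
                traceNorm (ptrace Λ'.1 Δ) / (2 * Λ'.1.card * c Λ'.1.card)) :=
            ((div_le_iff₀ (hden Λ hΛ)).mp h1).trans_eq (mul_comm _ _)
          rw [div_le_iff₀ hcard]
          exact h2.trans_eq (by ring)
        calc traceNorm (ptrace Λ Δ) * opNorm (F Λ)
            = ∑ _x ∈ Λ, traceNorm (ptrace Λ Δ) / (Λ.card : ℝ) * opNorm (F Λ) := by
              rw [Finset.sum_const, nsmul_eq_mul]
              field_simp
          _ ≤ ∑ x ∈ Λ, 2 * c Λ.card *
              (⨆ Λ' : {Λ' : Finset (Fin n) // x ∈ Λ'},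
                traceNorm (ptrace Λ'.1 Δ) / (2 * Λ'.1.card * c Λ'.1.card)) * opNorm (F Λ) :=
              Finset.sum_le_sum fun x hx =>
                mul_le_mul_of_nonneg_right (hsx x hx) (QW1Aux.opNorm_nonneg _)
    -- main chain
    have hmain : ((Δ * H).trace).re ≤ ∑ Λ : Finset (Fin n), ∑ x ∈ Λ, 2 * c Λ.card *
        (⨆ Λ' : {Λ' : Finset (Fin n) // x ∈ Λ'},
          traceNorm (ptrace Λ'.1 Δ) / (2 * Λ'.1.card * c Λ'.1.card)) * opNorm (F Λ) := by
      rw [hFsum, Finset.mul_sum, Matrix.trace_sum, Complex.re_sum]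
      exact Finset.sum_le_sum fun Λ _ => (key Λ).trans (key2 Λ)
    have hsup : ∀ x : Fin n,
        (∑ Λ ∈ Finset.univ.filter (fun Λ : Finset (Fin n) => x ∈ Λ),
          c Λ.card * opNorm (F Λ)) ≤ r₀ / 2 := by
      intro x
      have h1 : (∑ Λ ∈ Finset.univ.filter (fun Λ : Finset (Fin n) => x ∈ Λ),
          c Λ.card * opNorm (F Λ))
          ≤ ⨆ x : Fin n, ∑ Λ ∈ Finset.univ.filter (fun Λ : Finset (Fin n) => x ∈ Λ),
            c Λ.card * opNorm (F Λ) :=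
        le_ciSup (f := fun x : Fin n =>
          ∑ Λ ∈ Finset.univ.filter (fun Λ : Finset (Fin n) => x ∈ Λ),
            c Λ.card * opNorm (F Λ))
          (Set.Finite.bddAbove (Set.finite_range _)) x
      rw [hr₀] at *
      linarith
    have hinner : ∀ x : Fin n,
        (∑ Λ ∈ Finset.univ.filter (fun Λ : Finset (Fin n) => x ∈ Λ), 2 * c Λ.card *
          (⨆ Λ' : {Λ' : Finset (Fin n) // x ∈ Λ'},
            traceNorm (ptrace Λ'.1 Δ) / (2 * Λ'.1.card * c Λ'.1.card)) * opNorm (F Λ))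
        ≤ (⨆ Λ' : {Λ' : Finset (Fin n) // x ∈ Λ'},
            traceNorm (ptrace Λ'.1 Δ) / (2 * Λ'.1.card * c Λ'.1.card)) * (1 + ε') := by
      intro x
      have heq : (∑ Λ ∈ Finset.univ.filter (fun Λ : Finset (Fin n) => x ∈ Λ), 2 * c Λ.card *
          (⨆ Λ' : {Λ' : Finset (Fin n) // x ∈ Λ'},
            traceNorm (ptrace Λ'.1 Δ) / (2 * Λ'.1.card * c Λ'.1.card)) * opNorm (F Λ))
          = 2 * (⨆ Λ' : {Λ' : Finset (Fin n) // x ∈ Λ'},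
            traceNorm (ptrace Λ'.1 Δ) / (2 * Λ'.1.card * c Λ'.1.card)) *
            (∑ Λ ∈ Finset.univ.filter (fun Λ : Finset (Fin n) => x ∈ Λ),
              c Λ.card * opNorm (F Λ)) := by
        rw [Finset.mul_sum]
        exact Finset.sum_congr rfl fun Λ _ => by ring
      rw [heq]
      calc 2 * (⨆ Λ' : {Λ' : Finset (Fin n) // x ∈ Λ'},
            traceNorm (ptrace Λ'.1 Δ) / (2 * Λ'.1.card * c Λ'.1.card)) *
            (∑ Λ ∈ Finset.univ.filter (fun Λ : Finset (Fin n) => x ∈ Λ),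
              c Λ.card * opNorm (F Λ))
          ≤ 2 * (⨆ Λ' : {Λ' : Finset (Fin n) // x ∈ Λ'},
            traceNorm (ptrace Λ'.1 Δ) / (2 * Λ'.1.card * c Λ'.1.card)) * (r₀ / 2) := by
            refine mul_le_mul_of_nonneg_left (hsup x) ?_
            have := hs0 x
            linarith
        _ = (⨆ Λ' : {Λ' : Finset (Fin n) // x ∈ Λ'},
            traceNorm (ptrace Λ'.1 Δ) / (2 * Λ'.1.card * c Λ'.1.card)) * r₀ := by ring
        _ ≤ (⨆ Λ' : {Λ' : Finset (Fin n) // x ∈ Λ'},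
            traceNorm (ptrace Λ'.1 Δ) / (2 * Λ'.1.card * c Λ'.1.card)) * (1 + ε') :=
            mul_le_mul_of_nonneg_left (le_of_lt hr₀lt) (hs0 x)
    calc ((Δ * H).trace).re
        ≤ ∑ Λ : Finset (Fin n), ∑ x ∈ Λ, 2 * c Λ.card *
          (⨆ Λ' : {Λ' : Finset (Fin n) // x ∈ Λ'},
            traceNorm (ptrace Λ'.1 Δ) / (2 * Λ'.1.card * c Λ'.1.card)) * opNorm (F Λ) := hmain
      _ = ∑ x : Fin n, ∑ Λ ∈ Finset.univ.filter (fun Λ : Finset (Fin n) => x ∈ Λ),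
          2 * c Λ.card * (⨆ Λ' : {Λ' : Finset (Fin n) // x ∈ Λ'},
            traceNorm (ptrace Λ'.1 Δ) / (2 * Λ'.1.card * c Λ'.1.card)) * opNorm (F Λ) :=
          QW1Aux.double_count _
      _ ≤ ∑ x : Fin n, (⨆ Λ' : {Λ' : Finset (Fin n) // x ∈ Λ'},
            traceNorm (ptrace Λ'.1 Δ) / (2 * Λ'.1.card * c Λ'.1.card)) * (1 + ε') :=
          Finset.sum_le_sum fun x _ => hinner x
      _ = S * (1 + ε') := by rw [← Finset.sum_mul]
      _ ≤ S + ε := by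
          have h3 : ε' * S ≤ ε := by
            rw [hε'def, div_mul_eq_mul_div, div_le_iff₀ hS1]
            nlinarith
          nlinarith
  · -- second inequality
    have hsT : ∀ x : Fin n, (⨆ Λ : {Λ : Finset (Fin n) // x ∈ Λ},
        traceNorm (ptrace Λ.1 Δ) / (2 * Λ.1.card * c Λ.1.card))
        ≤ ⨆ Λ : {Λ : Finset (Fin n) // Λ.Nonempty},
          traceNorm (ptrace Λ.1 Δ) / (2 * Λ.1.card * c Λ.1.card) := by
      intro x
      haveI : Nonempty {Λ : Finset (Fin n) // x ∈ Λ} :=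
        ⟨⟨{x}, Finset.mem_singleton_self x⟩⟩
      refine ciSup_le fun Λ => ?_
      exact le_ciSup (f := fun Λ : {Λ : Finset (Fin n) // Λ.Nonempty} =>
        traceNorm (ptrace Λ.1 Δ) / (2 * Λ.1.card * c Λ.1.card))
        (Set.Finite.bddAbove (Set.finite_range _))
        (⟨Λ.1, ⟨x, Λ.2⟩⟩ : {Λ : Finset (Fin n) // Λ.Nonempty})
    calc (∑ x : Fin n, ⨆ Λ : {Λ : Finset (Fin n) // x ∈ Λ},
        traceNorm (ptrace Λ.1 Δ) / (2 * Λ.1.card * c Λ.1.card))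
        ≤ ∑ _x : Fin n, ⨆ Λ : {Λ : Finset (Fin n) // Λ.Nonempty},
          traceNorm (ptrace Λ.1 Δ) / (2 * Λ.1.card * c Λ.1.card) :=
          Finset.sum_le_sum fun x _ => hsT x
      _ = n * ⨆ Λ : {Λ : Finset (Fin n) // Λ.Nonempty},
          traceNorm (ptrace Λ.1 Δ) / (2 * Λ.1.card * c Λ.1.card) := by
          rw [Finset.sum_const, Finset.card_univ, Fintype.card_fin, nsmul_eq_mul]
end
end

section
/- Let ρ and σ be states of n qubits such that ρ_Λ = σ_Λ for every region Λ ⊂ [n] of size |Λ| < k. Then ‖ρ − σ‖_{W₁loc} ≤ n / (k c_k). -/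
open Matrix BigOperators
open scoped ComplexOrder

noncomputable section

open QW1 Matrix Complex

namespace QW1

variable {ι : Type*} [Fintype ι] [DecidableEq ι]

lemma opNorm_nonneg' {d : Type*} [Fintype d] [DecidableEq d] (A : Matrix d d ℂ) :
    0 ≤ opNorm A :=
  Real.iSup_nonneg fun _ => Real.sqrt_nonneg _

lemma abs_eigenvalue_le_opNorm {d : Type*} [Fintype d] [DecidableEq d]
    {A : Matrix d d ℂ} (hA : A.IsHermitian) (i : d) :
    |hA.eigenvalues i| ≤ opNorm A := by
  have h1 : hA.eigenvalues i ∈ spectrum ℝ A := hA.eigenvalues_mem_spectrum_real i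
  have h2 : (hA.eigenvalues i) ^ 2 ∈ spectrum ℝ (A ^ 2) :=
    spectrum.pow_image_subset A 2 ⟨_, h1, rfl⟩
  have hB : Aᴴ * A = A ^ 2 := by rw [hA.eq, sq]
  have h3 : (hA.eigenvalues i) ^ 2 ∈
      Set.range (Matrix.isHermitian_conjTranspose_mul_self A).eigenvalues := by
    rw [← Matrix.IsHermitian.spectrum_real_eq_range_eigenvalues, hB]
    exact h2
  obtain ⟨j, hj⟩ := h3
  have h4 : Real.sqrt ((Matrix.isHermitian_conjTranspose_mul_self A).eigenvalues j)
      = |hA.eigenvalues i| := by rw [hj, Real.sqrt_sq_eq_abs]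
  rw [← h4]
  exact le_ciSup (f := fun j =>
      Real.sqrt ((Matrix.isHermitian_conjTranspose_mul_self A).eigenvalues j))
    (Set.Finite.bddAbove (Set.finite_range _)) j

lemma abs_re_trace_mul_le {d : Type*} [Fintype d] [DecidableEq d]
    {ρ A : Matrix d d ℂ} (hρ : ρ.PosSemidef) (hρ1 : ρ.trace = 1)
    (hA : A.IsHermitian) : |((ρ * A).trace).re| ≤ opNorm A := by
  set V : Matrix d d ℂ := (Matrix.IsHermitian.eigenvectorUnitary hA : Matrix d d ℂ) with hVdef
  have hVV : V * star V = 1 := (Matrix.mem_unitaryGroup_iff).mp (hA.eigenvectorUnitary).2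
  set τ : Matrix d d ℂ := star V * ρ * V with hτdef
  have hτps : τ.PosSemidef := by
    have := hρ.conjTranspose_mul_mul_same (B := V)
    rwa [← Matrix.star_eq_conjTranspose] at this
  have hdiag : ∀ j, 0 ≤ (τ j j).re ∧ (τ j j).im = 0 := by
    intro j
    have h0 : (0 : ℂ) ≤ τ j j := by
      have := hτps.dotProduct_mulVec_nonneg (Pi.single j 1)
      simpa [Matrix.mulVec_single, dotProduct, Pi.single_apply] using this
    exact ⟨(Complex.le_def.mp h0).1, ((Complex.le_def.mp h0).2).symm⟩
  have htr : ∑ j, (τ j j).re = 1 := by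
    have h1 : τ.trace = 1 := by
      rw [hτdef, Matrix.trace_mul_cycle, hVV, one_mul, hρ1]
    have := congrArg Complex.re h1
    simpa [Matrix.trace, Matrix.diag, Complex.re_sum] using this
  have hkey : ((ρ * A).trace).re = ∑ j, (τ j j).re * hA.eigenvalues j := by
    conv_lhs => rw [hA.spectral_theorem, Unitary.conjStarAlgAut_apply]
    have : ρ * (V * Matrix.diagonal (RCLike.ofReal ∘ hA.eigenvalues) * star V)
        = (ρ * V * Matrix.diagonal (RCLike.ofReal ∘ hA.eigenvalues)) * star V := by
      simp only [mul_assoc]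
    rw [this, Matrix.trace_mul_comm, ← mul_assoc, ← mul_assoc, ← hτdef]
    rw [Matrix.trace]
    simp only [Matrix.diag, Matrix.mul_diagonal, Complex.re_sum]
    refine Finset.sum_congr rfl fun j _ => ?_
    simp [Complex.mul_re, RCLike.ofReal]
  rw [hkey]
  calc |∑ j, (τ j j).re * hA.eigenvalues j| ≤ ∑ j, |(τ j j).re * hA.eigenvalues j| :=
        Finset.abs_sum_le_sum_abs _ _
    _ ≤ ∑ j, (τ j j).re * opNorm A := by
        refine Finset.sum_le_sum fun j _ => ?_
        rw [abs_mul, _root_.abs_of_nonneg (hdiag j).1]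
        exact mul_le_mul_of_nonneg_left (abs_eigenvalue_le_opNorm hA j) (hdiag j).1
    _ = opNorm A := by rw [← Finset.sum_mul, htr, one_mul]

lemma embed_isHermitian {Λ : Finset ι}
    {M : Matrix ({x // x ∈ Λ} → Fin 2) ({x // x ∈ Λ} → Fin 2) ℂ} (hM : M.IsHermitian) :
    (embed Λ M).IsHermitian := by
  ext f g
  simp only [Matrix.conjTranspose_apply, embed]
  by_cases h : ∀ x : ι, x ∉ Λ → f x = g x
  · have h' : ∀ x : ι, x ∉ Λ → g x = f x := fun x hx => (h x hx).symm
    rw [if_pos h', if_pos h]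
    conv_rhs => rw [← hM.eq]
    rfl
  · have h' : ¬ ∀ x : ι, x ∉ Λ → g x = f x := fun h2 => h fun x hx => (h2 x hx).symm
    rw [if_neg h', if_neg h, star_zero]

lemma ptrace_sub (Λ : Finset ι) (A B : QMat ι) :
    ptrace Λ (A - B) = ptrace Λ A - ptrace Λ B := by
  ext f g
  simp [ptrace, Finset.sum_sub_distrib]

lemma trace_mul_embed (Λ : Finset ι) (A : QMat ι)
    (M : Matrix ({x // x ∈ Λ} → Fin 2) ({x // x ∈ Λ} → Fin 2) ℂ) :
    (A * embed Λ M).trace = ((ptrace Λ A) * M).trace := by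
  classical
  have hcond : ∀ (f : ι → Fin 2) (b : {x // x ∈ Λ} → Fin 2) (h2 : {x // x ∉ Λ} → Fin 2),
      (∀ x : ι, x ∉ Λ → merge Λ b h2 x = f x) ↔ h2 = fun x : {x // x ∉ Λ} => f x.1 := by
    intro f b h2
    constructor
    · intro H
      funext x
      have := H x.1 x.2
      rwa [merge, dif_neg x.2] at this
    · intro H x hx
      rw [merge, dif_neg hx, H]
  have hmergeIn : ∀ (b : {x // x ∈ Λ} → Fin 2) (h : {x // x ∉ Λ} → Fin 2),
      (fun x : {x // x ∈ Λ} => merge Λ b h x.1) = b := by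
    intro b h; funext x; rw [merge, dif_pos x.2]
  have hmergeOut : ∀ (b : {x // x ∈ Λ} → Fin 2) (h : {x // x ∉ Λ} → Fin 2),
      (fun x : {x // x ∉ Λ} => merge Λ b h x.1) = h := by
    intro b h; funext x; rw [merge, dif_neg x.2]
  have hsum : ∀ (F : (ι → Fin 2) → ℂ), ∑ f, F f =
      ∑ a : {x // x ∈ Λ} → Fin 2, ∑ h : {x // x ∉ Λ} → Fin 2, F (merge Λ a h) := by
    intro F
    rw [← Equiv.sum_comp
        (Equiv.piEquivPiSubtypeProd (fun x : ι => x ∈ Λ) (fun _ => Fin 2)).symm F,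
      Fintype.sum_prod_type]
    rfl
  calc (A * embed Λ M).trace
      = ∑ f, ∑ g, A f g * embed Λ M g f := by
        simp [Matrix.trace, Matrix.diag, Matrix.mul_apply]
    _ = ∑ f : ι → Fin 2, ∑ b : {x // x ∈ Λ} → Fin 2,
        A f (merge Λ b (fun x => f x.1)) * M b (fun x => f x.1) := by
        refine Finset.sum_congr rfl fun f _ => ?_
        rw [hsum fun g => A f g * embed Λ M g f]
        refine Finset.sum_congr rfl fun b _ => ?_
        rw [Finset.sum_eq_single (fun x : {x // x ∉ Λ} => f x.1)]
        · congr 1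
          show (if ∀ x : ι, x ∉ Λ → merge Λ b (fun x : {x // x ∉ Λ} => f x.1) x = f x then
            M (fun x => merge Λ b (fun x : {x // x ∉ Λ} => f x.1) x.1) (fun x => f x.1)
            else 0) = M b (fun x => f x.1)
          rw [if_pos ((hcond f b _).mpr rfl), hmergeIn]
        · intro h2 _ hne
          have hz : embed Λ M (merge Λ b h2) f = 0 := by
            show (if ∀ x : ι, x ∉ Λ → merge Λ b h2 x = f x then
              M (fun x => merge Λ b h2 x.1) (fun x => f x.1) else 0) = 0
            rw [if_neg (fun H => hne ((hcond f b h2).mp H))]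
          rw [hz, mul_zero]
        · intro h; exact absurd (Finset.mem_univ _) h
    _ = ∑ a : {x // x ∈ Λ} → Fin 2, ∑ h : {x // x ∉ Λ} → Fin 2,
        ∑ b : {x // x ∈ Λ} → Fin 2, A (merge Λ a h) (merge Λ b h) * M b a := by
        rw [hsum (fun f => ∑ b : {x // x ∈ Λ} → Fin 2,
          A f (merge Λ b (fun x => f x.1)) * M b (fun x => f x.1))]
        refine Finset.sum_congr rfl fun a _ => Finset.sum_congr rfl fun h _ =>
          Finset.sum_congr rfl fun b _ => ?_
        rw [hmergeOut a h, hmergeIn a h]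
    _ = ((ptrace Λ A) * M).trace := by
        simp only [Matrix.trace, Matrix.diag, Matrix.mul_apply, ptrace, Finset.sum_mul]
        refine Finset.sum_congr rfl fun a _ => ?_
        rw [Finset.sum_comm]

end QW1


/-- If the states `ρ` and `σ` have equal marginals on every region of size
less than `k`, then `‖ρ − σ‖_{W₁loc} ≤ n/(k c_k)`. -/
theorem stmt4 {n k : ℕ} (c : ℕ → ℝ) (hc1 : c 1 = 1)
    (hcmono : ∀ k' l, 1 ≤ k' → k' ≤ l → l ≤ n → c k' ≤ c l)
    (hk1 : 1 ≤ k) (hkn : k ≤ n)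
    (ρ σ : QMat (Fin n)) (hρ : IsState ρ) (hσ : IsState σ)
    (hmarg : ∀ Λ : Finset (Fin n), Λ.card < k → ptrace Λ ρ = ptrace Λ σ) :
    W1loc c (ρ - σ) ≤ n / (k * c k) := by
  classical
  have hn : 0 < n := lt_of_lt_of_le hk1 hkn
  have hck1 : (1:ℝ) ≤ c k := by simpa [hc1] using hcmono 1 k le_rfl hk1 hkn
  have hckpos : (0:ℝ) < c k := lt_of_lt_of_le one_pos hck1
  have hkcpos : (0:ℝ) < (k:ℝ) * c k :=
    mul_pos (by exact_mod_cast hk1) hckpos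
  refine Real.sSup_le ?_ (div_nonneg (Nat.cast_nonneg n) hkcpos.le)
  rintro r ⟨H, hH, hloc, rfl⟩
  set a : ℝ := (((ρ - σ) * H).trace).re with ha
  set S : Set ℝ := { r : ℝ | ∃ F : Finset (Fin n) → QMat (Fin n),
    (∀ Λ, ActsOn Λ (F Λ)) ∧ H = ∑ Λ, F Λ ∧
    r = 2 * ⨆ x : Fin n, ∑ Λ ∈ Finset.univ.filter (fun Λ : Finset (Fin n) => x ∈ Λ),
      c Λ.card * opNorm (F Λ) } with hS
  have hlocS : sInf S ≤ 1 := hloc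
  -- The set of decompositions is nonempty.
  have hne : S.Nonempty := by
    set M0 : Matrix ({x // x ∈ (Finset.univ : Finset (Fin n))} → Fin 2)
        ({x // x ∈ (Finset.univ : Finset (Fin n))} → Fin 2) ℂ :=
      fun p q => H (fun x => p ⟨x, Finset.mem_univ x⟩) (fun x => q ⟨x, Finset.mem_univ x⟩)
      with hM0
    set F0 : Finset (Fin n) → QMat (Fin n) :=
      fun Λ => if Λ = Finset.univ then H else 0 with hF0
    refine ⟨_, F0, fun Λ => ?_, ?_, rfl⟩
    · by_cases hΛ : Λ = Finset.univ
      · subst hΛ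
        refine ⟨M0, ?_, ?_⟩
        · ext p q
          simp only [Matrix.conjTranspose_apply, hM0]
          conv_rhs => rw [← hH.eq]
          rfl
        · simp only [hF0, if_pos rfl]
          ext f g
          show H f g = embed Finset.univ M0 f g
          simp only [embed, hM0]
          rw [if_pos (fun x hx => absurd (Finset.mem_univ x) hx)]
      · refine ⟨0, Matrix.isHermitian_zero, ?_⟩
        simp only [hF0, if_neg hΛ]
        ext f g
        simp [embed]
    · rw [Finset.sum_eq_single Finset.univ
        (fun b _ hb => by simp [hF0, if_neg hb])
        (fun h => absurd (Finset.mem_univ _) h)]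
      simp [hF0]
  -- Key estimate: every decomposition value `s` satisfies `a * (k * c k) ≤ n * s`.
  have claim : ∀ s ∈ S, a * ((k:ℝ) * c k) ≤ (n:ℝ) * s := by
    rintro s ⟨F, hF, hHsum, rfl⟩
    choose M hM hFM using hF
    set g : Fin n → ℝ := fun x => ∑ Λ ∈ Finset.univ.filter (fun Λ : Finset (Fin n) => x ∈ Λ),
      c Λ.card * opNorm (F Λ) with hg
    have hbound : ∀ x : Fin n, g x ≤ ⨆ y, g y := fun x =>
      le_ciSup (Set.Finite.bddAbove (Set.finite_range g)) x
    have hterm : ∀ Λ : Finset (Fin n), (((ρ - σ) * F Λ).trace).re ≤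
        (if k ≤ Λ.card then 2 * opNorm (F Λ) else 0) := by
      intro Λ
      by_cases hcard : k ≤ Λ.card
      · rw [if_pos hcard]
        have h1 : |((ρ * F Λ).trace).re| ≤ opNorm (F Λ) := by
          rw [hFM Λ]
          exact abs_re_trace_mul_le hρ.1 hρ.2 (embed_isHermitian (hM Λ))
        have h2 : |((σ * F Λ).trace).re| ≤ opNorm (F Λ) := by
          rw [hFM Λ]
          exact abs_re_trace_mul_le hσ.1 hσ.2 (embed_isHermitian (hM Λ))
        have hsub : (ρ - σ) * F Λ = ρ * F Λ - σ * F Λ := sub_mul _ _ _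
        rw [hsub, Matrix.trace_sub, Complex.sub_re, two_mul]
        calc (ρ * F Λ).trace.re - (σ * F Λ).trace.re
            ≤ |(ρ * F Λ).trace.re - (σ * F Λ).trace.re| := le_abs_self _
          _ ≤ |(ρ * F Λ).trace.re| + |(σ * F Λ).trace.re| := abs_sub _ _
          _ ≤ opNorm (F Λ) + opNorm (F Λ) := add_le_add h1 h2
      · rw [if_neg hcard]
        push_neg at hcard
        have hz : ptrace Λ (ρ - σ) = 0 := by
          rw [ptrace_sub, hmarg Λ hcard, sub_self]
        rw [hFM Λ, trace_mul_embed, hz, Matrix.zero_mul, Matrix.trace_zero]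
        simp
    have hsplit : a = ∑ Λ : Finset (Fin n), (((ρ - σ) * F Λ).trace).re := by
      rw [ha, hHsum, Finset.mul_sum, Matrix.trace_sum, Complex.re_sum]
    have h1 : a ≤ ∑ Λ : Finset (Fin n), (if k ≤ Λ.card then 2 * opNorm (F Λ) else 0) := by
      rw [hsplit]
      exact Finset.sum_le_sum fun Λ _ => hterm Λ
    have h2 : ∀ Λ : Finset (Fin n),
        ((k:ℝ) * c k) * (if k ≤ Λ.card then 2 * opNorm (F Λ) else 0)
        ≤ 2 * ∑ _x ∈ Λ, c Λ.card * opNorm (F Λ) := by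
      intro Λ
      have hcardn : Λ.card ≤ n := by
        simpa using Finset.card_le_univ Λ
      by_cases hcard : k ≤ Λ.card
      · rw [if_pos hcard, Finset.sum_const, nsmul_eq_mul]
        have hc2 : c k ≤ c Λ.card := hcmono k Λ.card hk1 hcard hcardn
        have hop : 0 ≤ opNorm (F Λ) := opNorm_nonneg' (F Λ)
        have hkc : (k:ℝ) * c k ≤ (Λ.card : ℝ) * c Λ.card :=
          mul_le_mul (by exact_mod_cast hcard) hc2 hckpos.le (Nat.cast_nonneg _)
        calc ((k:ℝ) * c k) * (2 * opNorm (F Λ))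
            ≤ ((Λ.card:ℝ) * c Λ.card) * (2 * opNorm (F Λ)) :=
              mul_le_mul_of_nonneg_right hkc (by positivity)
          _ = 2 * ((Λ.card:ℝ) * (c Λ.card * opNorm (F Λ))) := by ring
      · rw [if_neg hcard, mul_zero]
        refine mul_nonneg (by norm_num) (Finset.sum_nonneg fun x hx => ?_)
        have h1le : 1 ≤ Λ.card := Finset.card_pos.mpr ⟨x, hx⟩
        have hc1' : (1:ℝ) ≤ c Λ.card := by
          simpa [hc1] using hcmono 1 Λ.card le_rfl h1le hcardn
        exact mul_nonneg (le_trans zero_le_one hc1') (opNorm_nonneg' _)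
    have h3 : ∑ Λ : Finset (Fin n), (2:ℝ) * ∑ _x ∈ Λ, c Λ.card * opNorm (F Λ)
        = 2 * ∑ x : Fin n, g x := by
      rw [← Finset.mul_sum]
      congr 1
      have hrw : ∀ Λ : Finset (Fin n), ∑ _x ∈ Λ, c Λ.card * opNorm (F Λ)
          = ∑ x : Fin n, if x ∈ Λ then c Λ.card * opNorm (F Λ) else 0 := by
        intro Λ
        rw [Finset.sum_ite_mem, Finset.univ_inter]
      simp_rw [hrw, hg, Finset.sum_filter]
      exact Finset.sum_comm
    have h4 : ∑ x : Fin n, g x ≤ (n:ℝ) * ⨆ y, g y := by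
      calc ∑ x : Fin n, g x ≤ ∑ _x : Fin n, ⨆ y, g y :=
            Finset.sum_le_sum fun x _ => hbound x
        _ = (n:ℝ) * ⨆ y, g y := by
            simp [Finset.sum_const, Finset.card_univ, nsmul_eq_mul]
    calc a * ((k:ℝ) * c k) = ((k:ℝ) * c k) * a := mul_comm _ _
      _ ≤ ((k:ℝ) * c k) *
          ∑ Λ : Finset (Fin n), (if k ≤ Λ.card then 2 * opNorm (F Λ) else 0) :=
            mul_le_mul_of_nonneg_left h1 hkcpos.le
      _ = ∑ Λ : Finset (Fin n),
          ((k:ℝ) * c k) * (if k ≤ Λ.card then 2 * opNorm (F Λ) else 0) := Finset.mul_sum _ _ _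
      _ ≤ ∑ Λ : Finset (Fin n), (2:ℝ) * ∑ _x ∈ Λ, c Λ.card * opNorm (F Λ) :=
            Finset.sum_le_sum fun Λ _ => h2 Λ
      _ = 2 * ∑ x : Fin n, g x := h3
      _ ≤ 2 * ((n:ℝ) * ⨆ y, g y) := by
            exact mul_le_mul_of_nonneg_left h4 (by norm_num)
      _ = (n:ℝ) * (2 * ⨆ y, g y) := by ring
  have hinf : a * ((k:ℝ) * c k) / n ≤ sInf S := by
    refine le_csInf hne fun s hs => ?_
    rw [div_le_iff₀ (by exact_mod_cast hn)]
    calc a * ((k:ℝ) * c k) ≤ (n:ℝ) * s := claim s hs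
      _ = s * n := mul_comm _ _
  have hfin : a * ((k:ℝ) * c k) / n ≤ 1 := le_trans hinf hlocS
  have hfin2 : a * ((k:ℝ) * c k) ≤ n := by
    rwa [div_le_one (by exact_mod_cast hn)] at hfin
  rw [le_div_iff₀ hkcpos]
  exact hfin2
end
end
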